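/- Let S ∈ ℝ and define, for x_1, x_2 > 0 with x_1 ≠ x_2, W02(x_1, x_2) = (1/(2(x_1 − x_2)²))·( (S² + 2(x_1 + x_2))/(√(1 + S²/(4x_1))·√(1 + S²/(4x_2))) − 2(x_1 + x_2) ). Then for every x > 0 the limit lim_{x_2 → x} W02(x, x_2) exists and equals −S²·(S² + 8x)/(4x·(S² + 4x)²); consequently the genus-one one-point function is W11(x) := (1/√(1 + S²/(4x)))·( (1/4)·lim_{x_2 → x} W02(x, x_2) + 1/(16x) ) = 1/(16·x·(1 + S²/(4x))^{5/2}). -/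

import Mathlib

noncomputable section

/-- The genus-zero two-point function of the generalized BGW model. -/
def W02 (S x₁ x₂ : ℝ) : ℝ :=
  (1/(2*(x₁ - x₂)^2)) *
    ((S^2 + 2*(x₁ + x₂)) /
        (Real.sqrt (1 + S^2/(4*x₁)) * Real.sqrt (1 + S^2/(4*x₂)))
      - 2*(x₁ + x₂))

/-- Rationalized form of `W02`, regular at coincident points. -/
lemma W02_eq_aux (S x y A B : ℝ) (hx : 0 < x) (hy : 0 < y) (hxy : y ≠ x)
    (hApos : 0 < A) (hBpos : 0 < B)
    (hA2 : A^2 = 1 + S^2/(4*x)) (hB2 : B^2 = 1 + S^2/(4*y)) :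
    (1/(2*(x - y)^2)) * ((S^2 + 2*(x + y)) / (A * B) - 2*(x + y))
      = -S^2*(S^2+4*(x+y)) / (8*x*y*(A*B)*(S^2+2*(x+y)+2*(x+y)*(A*B))) := by
  have hden : 0 < S^2+2*(x+y)+2*(x+y)*(A*B) := by positivity
  have hsub : x - y ≠ 0 := sub_ne_zero.mpr (Ne.symm hxy)
  have hAB2 : (A*B)^2 * (16*x*y) = (4*x+S^2)*(4*y+S^2) := by
    rw [mul_pow, hA2, hB2]; field_simp; ring
  rw [div_sub' (c := A * B) (by positivity), div_mul_div_comm, eq_div_iff (by positivity),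
    div_mul_eq_mul_div, div_eq_iff (by positivity)]
  linear_combination (-2*(x+y)^2*(A*B)) * hAB2

/-- the limit of `W02(x, x₂)` as `x₂ → x` exists and equals
`−S²(S²+8x)/(4x(S²+4x)²)`; consequently the genus-one one-point function is
`W11(x) = (1/√(1+S²/(4x)))·((1/4)·lim + 1/(16x)) = 1/(16x(1+S²/(4x))^{5/2})`. -/
theorem genus_one_one_point (S x : ℝ) (hx : 0 < x) :
    Filter.Tendsto (fun y => W02 S x y) (nhdsWithin x {x}ᶜ)
      (nhds (-S^2*(S^2 + 8*x)/(4*x*(S^2 + 4*x)^2))) ∧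
    (1/Real.sqrt (1 + S^2/(4*x))) *
        ((1/4) * (-S^2*(S^2 + 8*x)/(4*x*(S^2 + 4*x)^2)) + 1/(16*x))
      = 1/(16*x*(1 + S^2/(4*x)) ^ ((5:ℝ)/2)) := by
  have hAx : (0:ℝ) < 1 + S^2/(4*x) := by positivity
  have hApos : 0 < Real.sqrt (1 + S^2/(4*x)) := Real.sqrt_pos.mpr hAx
  have hA2 : (Real.sqrt (1 + S^2/(4*x)))^2 = 1 + S^2/(4*x) := Real.sq_sqrt hAx.le
  constructor
  · set A := Real.sqrt (1 + S^2/(4*x)) with hAdef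
    set g : ℝ → ℝ := fun y => -S^2*(S^2+4*(x+y)) /
        (8*x*y*(A*Real.sqrt (1 + S^2/(4*y)))*
          (S^2+2*(x+y)+2*(x+y)*(A*Real.sqrt (1 + S^2/(4*y))))) with hg
    have hgx : g x = -S^2*(S^2 + 8*x)/(4*x*(S^2 + 4*x)^2) := by
      simp only [hg]
      rw [← hAdef, show A * A = 1 + S^2/(4*x) by rw [← sq]; exact hA2]
      have hx' : x ≠ 0 := hx.ne'
      have h4 : S^2 + 4*x ≠ 0 := by positivity
      field_simp
      ring
    have hcont : ContinuousAt g x := by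
      apply ContinuousAt.div
      · fun_prop
      · fun_prop (disch := positivity)
      · positivity
    have htend : Filter.Tendsto g (nhdsWithin x {x}ᶜ)
        (nhds (-S^2*(S^2 + 8*x)/(4*x*(S^2 + 4*x)^2))) := by
      rw [← hgx]
      exact hcont.continuousWithinAt.tendsto
    refine htend.congr' ?_
    filter_upwards [nhdsWithin_le_nhds (Ioi_mem_nhds hx), self_mem_nhdsWithin]
      with y hy hyx
    have hy0 : (0:ℝ) < y := hy
    have hyne : y ≠ x := hyx
    have hBx : (0:ℝ) < 1 + S^2/(4*y) := by positivity
    exact (W02_eq_aux S x y A (Real.sqrt (1 + S^2/(4*y))) hx hy0 hyne hApos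
      (Real.sqrt_pos.mpr hBx) hA2 (Real.sq_sqrt hBx.le)).symm
  · have h4 : (0:ℝ) < S^2 + 4*x := by positivity
    have hstep : (1/4) * (-S^2*(S^2 + 8*x)/(4*x*(S^2 + 4*x)^2)) + 1/(16*x)
        = x/(S^2+4*x)^2 := by
      field_simp
      ring
    rw [hstep]
    have hrpow : (1 + S^2/(4*x)) ^ ((5:ℝ)/2)
        = (1 + S^2/(4*x))^2 * Real.sqrt (1 + S^2/(4*x)) := by
      rw [Real.sqrt_eq_rpow, ← Real.rpow_natCast (1 + S^2/(4*x)) 2,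
        ← Real.rpow_add hAx]
      norm_num
    rw [hrpow, div_mul_div_comm, div_eq_div_iff (by positivity) (by positivity)]
    have h16 : 16*x^2*(1 + S^2/(4*x))^2 = (S^2+4*x)^2 := by
      field_simp; ring
    linear_combination Real.sqrt (1 + S^2/(4*x)) * h16
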